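/- Let W be a normed space with a family of seminorms ‖·‖_{W(ω)} indexed by measurable subsets ω that are subadditive: ‖w‖_{W(ω₁)} + ‖w‖_{W(ω₂)} ≤ ‖w‖_{W(ω₁∪ω₂)} whenever |ω₁ ∩ ω₂| = 0. Suppose every patch contains at most C_patch elements (#T_H[T] ≤ C_patch). Then for every mesh T_H and subset U_H ⊆ T_H: Σ_{T∈U_H} ‖w‖²_{W(Ω_H[T])} ≤ (C_patch² + 1) ‖w‖²_{W(Ω_H[U_H])} for all w ∈ W. -/
import Mathlib


open scoped Classical in
/-- Proposition 5.4 ([MSV08, Lemma 4.1, Step 2]): for a family of subadditive seminorms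
`N w ω` and a mesh `TH` with patches of at most `C_patch` elements, the sum of squared
patch-seminorms over any subset `UH ⊆ TH` is bounded by
`(C_patch² + 1)` times the squared seminorm on the union of the patches. -/
theorem stmt_19 {X : Type*} [TopologicalSpace X] [MeasureTheory.MeasureSpace X] {Wsp : Type*}
    (N : Wsp → Set X → ℝ) (Ω : Set X) (TH : Finset (Set X)) (C_patch : ℕ)
    -- mesh properties
    (hcompact : ∀ t ∈ TH, IsCompact t)
    (hposmeas : ∀ t ∈ TH, 0 < MeasureTheory.volume t)
    (hdisjoint : ∀ t ∈ TH, ∀ t' ∈ TH, t ≠ t' → MeasureTheory.volume (t ∩ t') = 0)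
    (hcover : ⋃₀ ↑TH = Ω)
    -- seminorm properties
    (hNnonneg : ∀ w ω, 0 ≤ N w ω)
    (hsubadd : ∀ (w : Wsp) (ω₁ ω₂ : Set X), MeasureTheory.volume (ω₁ ∩ ω₂) = 0 →
      N w ω₁ + N w ω₂ ≤ N w (ω₁ ∪ ω₂))
    -- bounded patches
    (hpatch : ∀ t ∈ TH, (TH.filter fun t' => (t' ∩ t).Nonempty).card ≤ C_patch) :
    ∀ UH ⊆ TH, ∀ w : Wsp,
      ∑ t ∈ UH, N w (⋃₀ ↑(TH.filter fun t' => (t' ∩ t).Nonempty)) ^ 2 ≤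
        ((C_patch : ℝ) ^ 2 + 1) *
          N w (⋃ t ∈ UH, ⋃₀ ↑(TH.filter fun t' => (t' ∩ t).Nonempty)) ^ 2 := by
  intro UH
  induction UH using Finset.strongInduction with
  | _ UH ih =>
  intro hUH w
  -- monotonicity of the seminorm
  have mono : ∀ (ω₁ ω₂ : Set X), ω₁ ⊆ ω₂ → N w ω₁ ≤ N w ω₂ := by
    intro ω₁ ω₂ h
    have h0 : MeasureTheory.volume (ω₁ ∩ (ω₂ \ ω₁)) = 0 := by
      rw [Set.inter_diff_self]; exact MeasureTheory.measure_empty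
    have h1 := hsubadd w ω₁ (ω₂ \ ω₁) h0
    rw [Set.union_diff_cancel h] at h1
    linarith [hNnonneg w (ω₂ \ ω₁)]
  rcases UH.eq_empty_or_nonempty with rfl | hne
  · simp only [Finset.sum_empty]
    positivity
  -- pick an element with maximal patch seminorm
  obtain ⟨t₀, ht₀UH, hmax⟩ := UH.exists_max_image
    (fun t => N w (⋃₀ ↑(TH.filter fun t' => (t' ∩ t).Nonempty))) hne
  set P : Set X → Finset (Set X) := fun t => TH.filter fun t' => (t' ∩ t).Nonempty with hPdef
  have ht₀ne : t₀.Nonempty := by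
    rw [Set.nonempty_iff_ne_empty]
    intro h
    have := hposmeas t₀ (hUH ht₀UH)
    rw [h] at this
    simp at this
  -- the set of elements of UH whose patch can meet the patch of t₀
  set conf : Set X → Prop := fun s => ∃ t'' ∈ TH, (t'' ∩ t₀).Nonempty ∧ (t'' ∩ s).Nonempty
    with hconfdef
  set B : Finset (Set X) := UH.filter conf with hBdef
  set R : Finset (Set X) := UH.filter (fun s => ¬ conf s) with hRdef
  have ht₀B : t₀ ∈ B := by
    refine Finset.mem_filter.mpr ⟨ht₀UH, t₀, hUH ht₀UH, ?_, ?_⟩ <;>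
      simpa using ht₀ne
  have hRsub : R ⊆ UH := Finset.filter_subset _ _
  have hRss : R ⊂ UH := by
    refine Finset.ssubset_iff_of_subset hRsub |>.mpr ⟨t₀, ht₀UH, ?_⟩
    intro h
    exact ((Finset.mem_filter.mp h).2) ((Finset.mem_filter.mp ht₀B).2)
  -- cardinality bound on B
  have hcardB : B.card ≤ C_patch ^ 2 := by
    have hsub : B ⊆ (P t₀).biUnion P := by
      intro s hs
      obtain ⟨hsUH, t'', ht''TH, h1, h2⟩ := Finset.mem_filter.mp hs
      refine Finset.mem_biUnion.mpr ⟨t'', ?_, ?_⟩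
      · exact Finset.mem_filter.mpr ⟨ht''TH, h1⟩
      · exact Finset.mem_filter.mpr ⟨hUH hsUH, by rwa [Set.inter_comm]⟩
    calc B.card ≤ ((P t₀).biUnion P).card := Finset.card_le_card hsub
      _ ≤ ∑ t'' ∈ P t₀, (P t'').card := Finset.card_biUnion_le
      _ ≤ ∑ t'' ∈ P t₀, C_patch := by
          refine Finset.sum_le_sum fun t'' ht'' => ?_
          exact hpatch t'' (Finset.mem_filter.mp ht'').1
      _ = (P t₀).card * C_patch := by rw [Finset.sum_const, smul_eq_mul]
      _ ≤ C_patch * C_patch := by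
          exact Nat.mul_le_mul_right _ (hpatch t₀ (hUH ht₀UH))
      _ = C_patch ^ 2 := (sq C_patch).symm
  -- the patch of t₀ is volume-disjoint from the patches of R
  have hnull : MeasureTheory.volume
      ((⋃₀ (↑(P t₀) : Set (Set X))) ∩ ⋃ s ∈ R, ⋃₀ (↑(P s) : Set (Set X))) = 0 := by
    have hsubset : (⋃₀ ↑(P t₀)) ∩ (⋃ s ∈ R, ⋃₀ ↑(P s)) ⊆
        ⋃ a ∈ (P t₀ : Set (Set X)), ⋃ s ∈ (R : Set (Set X)),
          ⋃ b ∈ (P s : Set (Set X)), a ∩ b := by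
      rintro x ⟨hx1, hx2⟩
      obtain ⟨a, haP, hxa⟩ := Set.mem_sUnion.mp hx1
      simp only [Set.mem_iUnion] at hx2 ⊢
      obtain ⟨s, hsR, hx2⟩ := hx2
      obtain ⟨b, hbP, hxb⟩ := Set.mem_sUnion.mp hx2
      exact ⟨a, haP, s, hsR, b, hbP, hxa, hxb⟩
    refine MeasureTheory.measure_mono_null hsubset ?_
    rw [MeasureTheory.measure_biUnion_null_iff (P t₀).countable_toSet]
    intro a haP
    rw [MeasureTheory.measure_biUnion_null_iff R.countable_toSet]
    intro s hsR
    rw [MeasureTheory.measure_biUnion_null_iff (P s).countable_toSet]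
    intro b hbP
    simp only [Finset.mem_coe] at haP hsR hbP
    obtain ⟨haTH, ha1⟩ := Finset.mem_filter.mp haP
    obtain ⟨hbTH, hb1⟩ := Finset.mem_filter.mp hbP
    by_cases hab : a = b
    · exfalso
      subst hab
      exact (Finset.mem_filter.mp hsR).2 ⟨a, haTH, ha1, hb1⟩
    · exact hdisjoint a haTH b hbTH hab
  -- abbreviations
  set a : ℝ := N w (⋃₀ ↑(P t₀)) with hadef
  set b : ℝ := N w (⋃ s ∈ R, ⋃₀ ↑(P s)) with hbdef
  set M : ℝ := N w (⋃ t ∈ UH, ⋃₀ ↑(P t)) with hMdef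
  have ha0 : 0 ≤ a := hNnonneg w _
  have hb0 : 0 ≤ b := hNnonneg w _
  have habM : a + b ≤ M := by
    have h1 := hsubadd w _ _ hnull
    refine h1.trans (mono _ _ ?_)
    apply Set.union_subset
    · exact Set.subset_biUnion_of_mem (u := fun t => ⋃₀ (↑(P t) : Set (Set X))) ht₀UH
    · exact Set.iUnion₂_mono' fun s hs => ⟨s, hRsub hs, subset_rfl⟩
  -- induction hypothesis on R
  have hIH : ∑ t ∈ R, N w (⋃₀ ↑(P t)) ^ 2 ≤ ((C_patch : ℝ) ^ 2 + 1) * b ^ 2 :=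
    ih R hRss (hRsub.trans hUH) w
  -- bound on the sum over B
  have hB : ∑ t ∈ B, N w (⋃₀ ↑(P t)) ^ 2 ≤ (C_patch : ℝ) ^ 2 * a ^ 2 := by
    have h1 : ∀ t ∈ B, N w (⋃₀ ↑(P t)) ^ 2 ≤ a ^ 2 := by
      intro t ht
      have := hmax t (Finset.mem_filter.mp ht).1
      have h0 := hNnonneg w (⋃₀ ↑(P t))
      nlinarith
    calc ∑ t ∈ B, N w (⋃₀ ↑(P t)) ^ 2 ≤ ∑ _t ∈ B, a ^ 2 := Finset.sum_le_sum h1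
      _ = (B.card : ℝ) * a ^ 2 := by rw [Finset.sum_const, nsmul_eq_mul]
      _ ≤ (C_patch : ℝ) ^ 2 * a ^ 2 := by
          have : (B.card : ℝ) ≤ (C_patch : ℝ) ^ 2 := by
            exact_mod_cast hcardB
          nlinarith [sq_nonneg a]
  -- split the sum
  have hsplit : ∑ t ∈ UH, N w (⋃₀ ↑(P t)) ^ 2 =
      ∑ t ∈ B, N w (⋃₀ ↑(P t)) ^ 2 + ∑ t ∈ R, N w (⋃₀ ↑(P t)) ^ 2 :=
    (Finset.sum_filter_add_sum_filter_not UH conf _).symm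
  rw [hsplit]
  have hC0 : (0 : ℝ) ≤ (C_patch : ℝ) ^ 2 := by positivity
  have hsq : (a + b) ^ 2 ≤ M ^ 2 := by nlinarith
  nlinarith [sq_nonneg a, mul_nonneg ha0 hb0, mul_nonneg hC0 (mul_nonneg ha0 hb0),
    mul_le_mul_of_nonneg_left hsq hC0]
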